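/- Let π be a possibility distribution on ℝⁿ satisfying Assumption 1, let ℓ be a positive integer, ε ∈ [0,1), b ∈ ℝ, x ∈ ℝⁿ, and let g : ℝ → ℝ be a nondecreasing convex function. Then sup_{P ∈ P_π^ℓ} CVaR_P^ε[g(ãᵀx)] ≤ b holds if and only if there exists t ∈ ℝ such that sup_{P ∈ P_π^ℓ} ∫_{C(0)} max(g(aᵀx) − t, 0) dP(a) ≤ (b − t)(1 − ε). -/

import Mathlib

open MeasureTheory Set


lemma abel_sum (v : ℕ → ℝ) (m : ℕ) :
    ∑ i ∈ Finset.range m, (v i - v (i+1)) * (i+1) = (∑ i ∈ Finset.range m, v i) - m * v m := by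
  induction m with
  | zero => simp
  | succ m ih =>
    rw [Finset.sum_range_succ, ih, Finset.sum_range_succ]
    push_cast
    ring

lemma telescope_ico (v : ℕ → ℝ) {k m : ℕ} (h : k ≤ m) :
    ∑ i ∈ Finset.Ico k m, (v i - v (i+1)) = v k - v m := by
  induction m, h using Nat.le_induction with
  | base => simp
  | succ m hm ih => rw [Finset.sum_Ico_succ_top hm, ih]; ring

lemma filter_le_range (k m : ℕ) :
    Finset.filter (fun i => k ≤ i) (Finset.range m) = Finset.Ico k m := by
  ext i; simp [Finset.mem_filter, Finset.mem_range, Finset.mem_Ico, and_comm]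

/-- Conditional Value at Risk at level `ε` of the random variable `X` under `P`. -/
noncomputable def cvar {Ω : Type*} [MeasurableSpace Ω] (P : Measure Ω) (ε : ℝ) (X : Ω → ℝ) : ℝ :=
  ⨅ t : ℝ, (t + (1 / (1 - ε)) * ∫ a, max (X a - t) 0 ∂P)

/-- The discrete ambiguity set `P_π^ℓ`. -/
def ambiguitySet (n ℓ : ℕ) (C : ℝ → Set (Fin n → ℝ)) : Set (Measure (Fin n → ℝ)) :=
  {P | IsProbabilityMeasure P ∧
    ∀ i : Fin (ℓ + 1), ENNReal.ofReal (1 - ((i : ℕ) : ℝ) / ℓ) ≤ P (C (((i : ℕ) : ℝ) / ℓ))}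

/-- `sup_{P ∈ P_π^ℓ} CVaR_P^ε[g(ãᵀx)] ≤ b` iff there exists `t ∈ ℝ` with
`sup_{P ∈ P_π^ℓ} ∫_{C(0)} max(g(aᵀx) − t, 0) dP(a) ≤ (b − t)(1 − ε)`. -/
theorem cvar_constraint_iff_exists_t (n ℓ : ℕ) (hn : 1 ≤ n) (hℓ : 1 ≤ ℓ)
    (π : (Fin n → ℝ) → ℝ) (hrange : ∀ a, π a ∈ Icc (0 : ℝ) 1)
    (C : ℝ → Set (Fin n → ℝ))
    (hcut : ∀ lam : ℝ, 0 < lam → C lam = {a | lam ≤ π a})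
    (hsupp : C 0 = closure {a | 0 < π a})
    (ahat : Fin n → ℝ) (hnorm : π ahat = 1)
    (hcont : ContinuousOn π (C 0))
    (hcompact : IsCompact (C 0))
    (hclosed : ∀ lam ∈ Icc (0 : ℝ) 1, IsClosed (C lam))
    (hconvex : ∀ lam ∈ Icc (0 : ℝ) 1, Convex ℝ (C lam))
    (hint : ∀ lam ∈ Ico (0 : ℝ) 1, (interior (C lam)).Nonempty)
    (ε : ℝ) (hε : ε ∈ Ico (0 : ℝ) 1) (b : ℝ) (x : Fin n → ℝ)
    (g : ℝ → ℝ) (hg : Monotone g) (hgconv : ConvexOn ℝ univ g) :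
    (∀ P ∈ ambiguitySet n ℓ C, cvar P ε (fun a => g (∑ j, a j * x j)) ≤ b)
    ↔ ∃ t : ℝ, ∀ P ∈ ambiguitySet n ℓ C,
        ∫ a, max (g (∑ j, a j * x j) - t) 0 ∂P ≤ (b - t) * (1 - ε) := by
  classical
  obtain ⟨m, rfl⟩ : ∃ m, ℓ = m + 1 := ⟨ℓ - 1, by omega⟩
  set ℓ := m + 1 with hℓdef
  set L : (Fin n → ℝ) → ℝ := fun a => ∑ j, a j * x j with hLdef
  have hL : Continuous L := by
    exact continuous_finset_sum _ fun j _ => (continuous_apply j).mul continuous_const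
  have hgm : Measurable g := hg.measurable
  have hlpos : (0:ℝ) < (ℓ:ℝ) := by positivity
  have h1e : (0:ℝ) < 1 - ε := by have := hε.2; linarith
  set c : ℝ := 1 / (1 - ε) with hcdef
  have hcpos : 0 < c := by positivity
  have hc1 : 1 ≤ c := by rw [hcdef, le_div_iff₀ h1e]; linarith [hε.1]
  -- cut facts
  have hsub0 : ∀ lam : ℝ, 0 < lam → C lam ⊆ C 0 := by
    intro lam hl
    rw [hcut lam hl, hsupp]
    exact fun a ha => subset_closure (lt_of_lt_of_le hl ha)
  have hmono : ∀ p q : ℝ, 0 ≤ p → p ≤ q → C q ⊆ C p := by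
    intro p q hp hpq
    rcases eq_or_lt_of_le hp with h0 | h0
    · rcases eq_or_lt_of_le (le_trans hp hpq) with hq | hq
      · rw [← h0, ← hq]
      · rw [← h0]; exact hsub0 q hq
    · have hq : 0 < q := lt_of_lt_of_le h0 hpq
      rw [hcut p h0, hcut q hq]
      exact fun a ha => le_trans hpq ha
  have hahat : ∀ lam : ℝ, 0 ≤ lam → lam ≤ 1 → ahat ∈ C lam := by
    intro lam h0 h1
    rcases eq_or_lt_of_le h0 with h | h
    · rw [← h, hsupp]; exact subset_closure (by simp [hnorm])
    · rw [hcut lam h]; simpa [hnorm] using h1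
  have hCcpt : ∀ lam : ℝ, 0 ≤ lam → lam ≤ 1 → IsCompact (C lam) := by
    intro lam h0 h1
    rcases eq_or_lt_of_le h0 with h | h
    · rwa [← h]
    · exact hcompact.of_isClosed_subset (hclosed lam ⟨h0, h1⟩) (hsub0 lam h)
  have hmeasC : ∀ lam : ℝ, 0 ≤ lam → lam ≤ 1 → MeasurableSet (C lam) :=
    fun lam h0 h1 => (hclosed lam ⟨h0, h1⟩).measurableSet
  -- maximizers of L on the cuts
  have hex : ∀ i : ℕ, ∃ a, a ∈ C (min ((i:ℝ)/ℓ) 1) ∧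
      ∀ y ∈ C (min ((i:ℝ)/ℓ) 1), L y ≤ L a := by
    intro i
    have h0 : (0:ℝ) ≤ min ((i:ℝ)/ℓ) 1 := le_min (by positivity) zero_le_one
    have h1 : min ((i:ℝ)/ℓ) 1 ≤ 1 := min_le_right _ _
    obtain ⟨a, ha, hmax⟩ := (hCcpt _ h0 h1).exists_isMaxOn ⟨ahat, hahat _ h0 h1⟩ hL.continuousOn
    exact ⟨a, ha, fun y hy => hmax hy⟩
  choose A hAmem0 hAmax0 using hex
  have hmin : ∀ i : ℕ, i ≤ ℓ → min ((i:ℝ)/ℓ) 1 = (i:ℝ)/ℓ := by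
    intro i hi
    exact min_eq_left (by rw [div_le_one hlpos]; exact_mod_cast hi)
  have hAmem : ∀ i : ℕ, i ≤ ℓ → A i ∈ C ((i:ℝ)/ℓ) := by
    intro i hi; have := hAmem0 i; rwa [hmin i hi] at this
  have hAmax : ∀ i : ℕ, i ≤ ℓ → ∀ y ∈ C ((i:ℝ)/ℓ), L y ≤ L (A i) := by
    intro i hi; have := hAmax0 i; rwa [hmin i hi] at this
  set gA : ℕ → ℝ := fun i => g (L (A i)) with hgAdef
  have hgA_anti : ∀ i j : ℕ, i ≤ j → j ≤ ℓ → gA j ≤ gA i := by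
    intro i j hij hj
    refine hg (hAmax i (le_trans hij hj) (A j) ?_)
    exact hmono ((i:ℝ)/ℓ) ((j:ℝ)/ℓ) (by positivity)
      ((div_le_div_iff_of_pos_right hlpos).2 (by exact_mod_cast hij)) (hAmem j hj)
  -- bounds on C 0
  have hzero : ((0:ℕ):ℝ)/(ℓ:ℝ) = 0 := by simp
  have hub : ∀ a ∈ C 0, L a ≤ L (A 0) := by
    intro a ha
    have := hAmax 0 (Nat.zero_le _)
    rw [hzero] at this
    exact this a ha
  obtain ⟨amin, hamin, hminOn⟩ :=
    hcompact.exists_isMinOn ⟨ahat, hahat 0 le_rfl zero_le_one⟩ hL.continuousOn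
  have hlb : ∀ a ∈ C 0, L amin ≤ L a := fun a ha => hminOn ha
  have hgub : ∀ a ∈ C 0, g (L a) ≤ gA 0 := fun a ha => hg (hub a ha)
  have hglb : ∀ a ∈ C 0, g (L amin) ≤ g (L a) := fun a ha => hg (hlb a ha)
  -- measure facts for P in the ambiguity set
  have hPineq : ∀ P ∈ ambiguitySet n ℓ C, ∀ k : ℕ, k ≤ ℓ →
      ENNReal.ofReal (1 - (k:ℝ)/ℓ) ≤ P (C ((k:ℝ)/ℓ)) := by
    intro P hP k hk
    have := hP.2 ⟨k, by omega⟩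
    simpa using this
  have hP1 : ∀ P ∈ ambiguitySet n ℓ C, P (C 0) = 1 := by
    intro P hP
    have h := hPineq P hP 0 (Nat.zero_le _)
    rw [hzero] at h
    simp only [Nat.cast_zero, zero_div, sub_zero, ENNReal.ofReal_one] at h
    have : IsProbabilityMeasure P := hP.1
    exact le_antisymm prob_le_one h
  have hae : ∀ P ∈ ambiguitySet n ℓ C, ∀ᵐ a ∂P, a ∈ C 0 := by
    intro P hP
    have : IsProbabilityMeasure P := hP.1
    have hc0 : P (C 0)ᶜ = 0 := by
      rw [prob_compl_eq_one_sub (hmeasC 0 le_rfl zero_le_one), hP1 P hP, tsub_self]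
    rw [ae_iff]
    exact hc0
  have hPcompl : ∀ P ∈ ambiguitySet n ℓ C, ∀ k : ℕ, k ≤ ℓ →
      (P (C ((k:ℝ)/ℓ))ᶜ).toReal ≤ (k:ℝ)/ℓ := by
    intro P hP k hk
    have : IsProbabilityMeasure P := hP.1
    have hk1 : (k:ℝ)/ℓ ≤ 1 := by rw [div_le_one hlpos]; exact_mod_cast hk
    have hk0 : (0:ℝ) ≤ (k:ℝ)/ℓ := by positivity
    have hle : P (C ((k:ℝ)/ℓ))ᶜ ≤ ENNReal.ofReal ((k:ℝ)/ℓ) := by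
      rw [prob_compl_eq_one_sub (hmeasC _ hk0 hk1)]
      calc 1 - P (C ((k:ℝ)/ℓ)) ≤ 1 - ENNReal.ofReal (1 - (k:ℝ)/ℓ) :=
            tsub_le_tsub_left (hPineq P hP k hk) 1
        _ = ENNReal.ofReal ((k:ℝ)/ℓ) := by
            rw [← ENNReal.ofReal_one, ← ENNReal.ofReal_sub _ (by linarith)]
            norm_num
    calc (P (C ((k:ℝ)/ℓ))ᶜ).toReal ≤ (ENNReal.ofReal ((k:ℝ)/ℓ)).toReal :=
          ENNReal.toReal_mono ENNReal.ofReal_ne_top hle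
      _ = (k:ℝ)/ℓ := ENNReal.toReal_ofReal hk0
  -- integrability
  have hIntOf : ∀ P ∈ ambiguitySet n ℓ C, ∀ (f : (Fin n → ℝ) → ℝ) (Mf : ℝ),
      Measurable f → (∀ a ∈ C 0, |f a| ≤ Mf) → Integrable f P := by
    intro P hP f Mf hfm hfb
    have : IsProbabilityMeasure P := hP.1
    exact (integrable_const Mf).mono' hfm.aestronglyMeasurable
      ((hae P hP).mono fun a ha => by simpa [Real.norm_eq_abs] using hfb a ha)
  have hmeas_h : ∀ t : ℝ, Measurable (fun a => max (g (L a) - t) 0) :=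
    fun t => ((hgm.comp hL.measurable).sub measurable_const).max measurable_const
  have hInth : ∀ P ∈ ambiguitySet n ℓ C, ∀ t : ℝ,
      Integrable (fun a => max (g (L a) - t) 0) P := by
    intro P hP t
    refine hIntOf P hP _ (max (gA 0 - t) 0) (hmeas_h t) fun a ha => ?_
    rw [abs_of_nonneg (le_max_right _ _)]
    exact max_le_max (sub_le_sub_right (hgub a ha) t) le_rfl
  have hIntg : ∀ P ∈ ambiguitySet n ℓ C, Integrable (fun a => g (L a)) P := by
    intro P hP
    refine hIntOf P hP _ (max |g (L amin)| |gA 0|) (hgm.comp hL.measurable) fun a ha => ?_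
    exact abs_le_max_abs_abs (hglb a ha) (hgub a ha)
  -- dominance: worst-case bound on the integral, uniform over the ambiguity set
  have hdom : ∀ P ∈ ambiguitySet n ℓ C, ∀ t : ℝ,
      ∫ a, max (g (L a) - t) 0 ∂P ≤ (1/(ℓ:ℝ)) * ∑ i ∈ Finset.range ℓ, max (gA i - t) 0 := by
    intro P hP t
    have : IsProbabilityMeasure P := hP.1
    set v : ℕ → ℝ := fun i => max (gA i - t) 0 with hvdef
    have hv0 : ∀ i, 0 ≤ v i := fun i => le_max_right _ _
    have hvanti : ∀ i j : ℕ, i ≤ j → j ≤ ℓ → v j ≤ v i := fun i j hij hj =>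
      max_le_max (sub_le_sub_right (hgA_anti i j hij hj) t) le_rfl
    set f : (Fin n → ℝ) → ℝ := fun a => v m +
        ∑ i ∈ Finset.range m, (v i - v (i+1)) * (if a ∈ C (((i+1:ℕ):ℝ)/ℓ) then 0 else 1)
      with hfdef
    -- pointwise bound on C 0
    have hpt : ∀ a ∈ C 0, max (g (L a) - t) 0 ≤ f a := by
      intro a ha
      set Pd : ℕ → Prop := fun i => a ∈ C ((i:ℝ)/ℓ) with hPddef
      have hPd0 : Pd 0 := by rw [hPddef]; simpa [hzero] using ha
      set k : ℕ := Nat.findGreatest Pd m with hkdef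
      have hk : Pd k := Nat.findGreatest_spec (Nat.zero_le _) hPd0
      have hkle : k ≤ m := Nat.findGreatest_le _
      have hnot : ∀ j : ℕ, k < j → j ≤ m → ¬ Pd j := fun j h1 h2 =>
        Nat.findGreatest_is_greatest h1 h2
      have h1 : max (g (L a) - t) 0 ≤ v k :=
        max_le_max (sub_le_sub_right (hg (hAmax k (by omega) a hk)) t) le_rfl
      have h2 : v k ≤ f a := by
        have hstep : ∀ i ∈ Finset.range m,
            (if k ≤ i then v i - v (i+1) else 0) ≤
            (v i - v (i+1)) * (if a ∈ C (((i+1:ℕ):ℝ)/ℓ) then 0 else 1) := by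
          intro i hi
          have him : i < m := Finset.mem_range.1 hi
          have hco : 0 ≤ v i - v (i+1) :=
            sub_nonneg.2 (hvanti i (i+1) (Nat.le_succ _) (by omega))
          by_cases hki : k ≤ i
          · have hnmem : ¬ a ∈ C (((i+1:ℕ):ℝ)/ℓ) := hnot (i+1) (by omega) (by omega)
            rw [if_pos hki, if_neg hnmem, mul_one]
          · simp only [if_neg hki]
            split
            · simp
            · simpa using hco
        have hsum : ∑ i ∈ Finset.range m, (if k ≤ i then v i - v (i+1) else 0)
            = v k - v m := by
          rw [Finset.sum_ite, Finset.sum_const_zero, add_zero, filter_le_range,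
            telescope_ico v hkle]
        calc v k = v m + (v k - v m) := by ring
          _ ≤ f a := by
              rw [hfdef, ← hsum]
              exact add_le_add_right (Finset.sum_le_sum hstep) _
      exact le_trans h1 h2
    -- integrability of f
    have hmeasCk : ∀ i : ℕ, i < m → MeasurableSet (C (((i+1:ℕ):ℝ)/ℓ)) := by
      intro i hi
      exact hmeasC _ (by positivity) (by rw [div_le_one hlpos]; exact_mod_cast (by omega : i+1 ≤ ℓ))
    have hindic : ∀ i : ℕ, (fun a => (v i - v (i+1)) * (if a ∈ C (((i+1:ℕ):ℝ)/ℓ) then 0 else 1))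
        = fun a => (C (((i+1:ℕ):ℝ)/ℓ))ᶜ.indicator (fun _ => v i - v (i+1)) a := by
      intro i
      funext a
      by_cases h : a ∈ C (((i+1:ℕ):ℝ)/ℓ) <;> simp [h, Set.indicator]
    have hintf : Integrable f P := by
      rw [hfdef]
      refine (integrable_const (v m)).add (integrable_finset_sum _ fun i hi => ?_)
      rw [hindic i]
      exact (integrable_const _).indicator (hmeasCk i (Finset.mem_range.1 hi)).compl
    -- integral of f
    have hif : ∫ a, f a ∂P = v m + ∑ i ∈ Finset.range m,
        (v i - v (i+1)) * (P (C (((i+1:ℕ):ℝ)/ℓ))ᶜ).toReal := by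
      rw [hfdef]
      rw [integral_add (integrable_const _) (integrable_finset_sum _ fun i hi => by
        rw [hindic i]
        exact (integrable_const _).indicator (hmeasCk i (Finset.mem_range.1 hi)).compl)]
      rw [integral_const]
      simp only [measure_univ, probReal_univ, ENNReal.toReal_one, one_smul]
      congr 1
      rw [integral_finset_sum _ fun i hi => by
        rw [hindic i]
        exact (integrable_const _).indicator (hmeasCk i (Finset.mem_range.1 hi)).compl]
      refine Finset.sum_congr rfl fun i hi => ?_
      rw [hindic i, integral_indicator_const _ (hmeasCk i (Finset.mem_range.1 hi)).compl]
      simp [mul_comm, Measure.real]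
    calc ∫ a, max (g (L a) - t) 0 ∂P ≤ ∫ a, f a ∂P :=
          integral_mono_ae (hInth P hP t) hintf ((hae P hP).mono hpt)
      _ = v m + ∑ i ∈ Finset.range m,
            (v i - v (i+1)) * (P (C (((i+1:ℕ):ℝ)/ℓ))ᶜ).toReal := hif
      _ ≤ v m + ∑ i ∈ Finset.range m, (v i - v (i+1)) * (((i+1:ℕ):ℝ)/ℓ) := by
          refine add_le_add_right (Finset.sum_le_sum fun i hi => ?_) _
          have him : i < m := Finset.mem_range.1 hi
          have hco : 0 ≤ v i - v (i+1) :=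
            sub_nonneg.2 (hvanti i (i+1) (Nat.le_succ _) (by omega))
          exact mul_le_mul_of_nonneg_left (hPcompl P hP (i+1) (by omega)) hco
      _ = (1/(ℓ:ℝ)) * ∑ i ∈ Finset.range ℓ, v i := by
          have habel := abel_sum v m
          have hsplit : ∑ i ∈ Finset.range ℓ, v i = (∑ i ∈ Finset.range m, v i) + v m :=
            Finset.sum_range_succ v m
          have hrw : ∑ i ∈ Finset.range m, (v i - v (i+1)) * (((i+1:ℕ):ℝ)/ℓ)
              = (1/(ℓ:ℝ)) * ∑ i ∈ Finset.range m, (v i - v (i+1)) * ((i:ℝ)+1) := by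
            rw [Finset.mul_sum]
            refine Finset.sum_congr rfl fun i hi => ?_
            push_cast
            ring
          rw [hrw, habel, hsplit]
          have : ((ℓ:ℕ):ℝ) = (m:ℝ) + 1 := by rw [hℓdef]; push_cast; ring
          rw [this]
          field_simp
          ring
  -- the worst-case discrete measure
  set Ps : Measure (Fin n → ℝ) :=
      ((ℓ:ENNReal))⁻¹ • ∑ i ∈ Finset.range ℓ, Measure.dirac (A i) with hPsdef
  have hlne0 : ((ℓ:ENNReal)) ≠ 0 := by
    simp [hℓdef]
  have hlnetop : ((ℓ:ENNReal)) ≠ ⊤ := ENNReal.natCast_ne_top _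
  have hPsapp : ∀ S : Set (Fin n → ℝ),
      Ps S = ((ℓ:ENNReal))⁻¹ * ∑ i ∈ Finset.range ℓ, Measure.dirac (A i) S := by
    intro S
    rw [hPsdef, Measure.smul_apply, Measure.finset_sum_apply, smul_eq_mul]
  have hPsprob : IsProbabilityMeasure Ps := by
    constructor
    rw [hPsapp]
    simp only [measure_univ, Finset.sum_const, Finset.card_range, nsmul_eq_mul, mul_one]
    exact ENNReal.inv_mul_cancel hlne0 hlnetop
  have hPsmem : Ps ∈ ambiguitySet n ℓ C := by
    refine ⟨hPsprob, fun j => ?_⟩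
    have hjle : (j:ℕ) ≤ ℓ := by omega
    have hsum_lb : ((ℓ - (j:ℕ) : ℕ) : ENNReal) ≤
        ∑ i ∈ Finset.range ℓ, Measure.dirac (A i) (C (((j:ℕ):ℝ)/ℓ)) := by
      calc ((ℓ - (j:ℕ) : ℕ) : ENNReal)
          = ∑ i ∈ Finset.Ico (j:ℕ) ℓ, 1 := by
            rw [Finset.sum_const, Nat.card_Ico, nsmul_eq_mul, mul_one]
        _ = ∑ i ∈ Finset.Ico (j:ℕ) ℓ, Measure.dirac (A i) (C (((j:ℕ):ℝ)/ℓ)) := by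
            refine Finset.sum_congr rfl fun i hi => ?_
            obtain ⟨hji, hiℓ⟩ := Finset.mem_Ico.1 hi
            have hmem : A i ∈ C (((j:ℕ):ℝ)/ℓ) := by
              have hji' : (((j:ℕ):ℕ):ℝ) ≤ (i:ℝ) := by exact_mod_cast hji
              refine hmono _ _ (by positivity)
                ((div_le_div_iff_of_pos_right hlpos).2 hji') ?_
              exact hAmem i (by omega)
            rw [Measure.dirac_apply_of_mem hmem]
        _ ≤ ∑ i ∈ Finset.range ℓ, Measure.dirac (A i) (C (((j:ℕ):ℝ)/ℓ)) := by
            refine Finset.sum_le_sum_of_subset ?_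
            intro i hi
            rw [Finset.mem_range]
            exact (Finset.mem_Ico.1 hi).2
    have hofreal : ENNReal.ofReal (1 - ((j:ℕ):ℝ)/ℓ) = ((ℓ:ENNReal))⁻¹ * ((ℓ - (j:ℕ) : ℕ) : ENNReal) := by
      have h1 : (1 : ℝ) - ((j:ℕ):ℝ)/ℓ = (((ℓ - (j:ℕ) : ℕ)):ℝ) / ((ℓ:ℕ):ℝ) := by
        rw [Nat.cast_sub hjle]
        field_simp
      rw [h1, ENNReal.ofReal_div_of_pos (by exact_mod_cast hlpos), ENNReal.ofReal_natCast,
        ENNReal.ofReal_natCast, div_eq_mul_inv, mul_comm]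
    rw [hofreal, hPsapp]
    exact mul_le_mul_right hsum_lb _
  have hInt_dirac : ∀ (f : (Fin n → ℝ) → ℝ), Measurable f → ∀ a₀,
      Integrable f (Measure.dirac a₀) := by
    intro f hf a₀
    refine ⟨hf.aestronglyMeasurable, ?_⟩
    simp [HasFiniteIntegral, lintegral_dirac]
  have hPsint : ∀ t : ℝ, ∫ a, max (g (L a) - t) 0 ∂Ps
      = (1/(ℓ:ℝ)) * ∑ i ∈ Finset.range ℓ, max (gA i - t) 0 := by
    intro t
    rw [hPsdef, integral_smul_measure,
      integral_finset_sum_measure (fun i _ => hInt_dirac _ (hmeas_h t) (A i))]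
    simp only [integral_dirac]
    rw [ENNReal.toReal_inv, ENNReal.toReal_natCast, smul_eq_mul, one_div]
  -- the piecewise-linear objective and its minimizer
  set S : ℝ → ℝ := fun t => (1/(ℓ:ℝ)) * ∑ i ∈ Finset.range ℓ, max (gA i - t) 0 with hSdef
  set φ : ℝ → ℝ := fun t => t + c * S t with hφdef
  have hS0 : ∀ t, 0 ≤ S t := by
    intro t
    exact mul_nonneg (by positivity) (Finset.sum_nonneg fun i _ => le_max_right _ _)
  have hφget : ∀ s, s ≤ φ s := by
    intro s
    have := mul_nonneg hcpos.le (hS0 s)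
    simp only [hφdef]
    linarith
  have hSlin : ∀ t, t ≤ gA m → S t = (1/(ℓ:ℝ)) * (∑ i ∈ Finset.range ℓ, gA i) - t := by
    intro t htm
    have : ∀ i ∈ Finset.range ℓ, max (gA i - t) 0 = gA i - t := by
      intro i hi
      have hi' : i < ℓ := Finset.mem_range.1 hi
      have : gA m ≤ gA i := hgA_anti i m (by omega) (by omega)
      exact max_eq_left (by linarith)
    rw [hSdef]
    simp only []
    rw [Finset.sum_congr rfl this, Finset.sum_sub_distrib, Finset.sum_const,
      Finset.card_range, nsmul_eq_mul]
    field_simp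
  have hφlow : ∀ t, t ≤ gA m → φ (gA m) ≤ φ t := by
    intro t htm
    have h1 := hSlin t htm
    have h2 := hSlin (gA m) le_rfl
    simp only [hφdef]
    rw [h1, h2]
    nlinarith [mul_nonneg (sub_nonneg.2 hc1) (sub_nonneg.2 htm)]
  have hφcont : Continuous φ := by
    apply continuous_id.add
    apply continuous_const.mul
    apply continuous_const.mul
    exact continuous_finset_sum _ fun i _ =>
      (continuous_const.sub continuous_id).max continuous_const
  set T : ℝ := max (gA m) (φ (gA m)) with hTdef
  obtain ⟨ts, hts, htsmin⟩ := (isCompact_Icc (a := gA m) (b := T)).exists_isMinOn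
    ⟨gA m, le_rfl, le_max_left _ _⟩ hφcont.continuousOn
  have hglob : ∀ s, φ ts ≤ φ s := by
    intro s
    rcases le_total s (gA m) with h | h
    · exact le_trans (htsmin ⟨le_rfl, le_max_left _ _⟩) (hφlow s h)
    · rcases le_total s T with h2 | h2
      · exact htsmin ⟨h, h2⟩
      · calc φ ts ≤ φ (gA m) := htsmin ⟨le_rfl, le_max_left _ _⟩
          _ ≤ T := le_max_right _ _
          _ ≤ s := h2
          _ ≤ φ s := hφget s
  -- the equivalence
  constructor
  · intro H
    have h1 : cvar Ps ε (fun a => g (∑ j, a j * x j)) ≤ b := H Ps hPsmem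
    have h2 : cvar Ps ε (fun a => g (∑ j, a j * x j)) = ⨅ s : ℝ, φ s := by
      unfold cvar
      congr 1
      funext s
      show s + c * ∫ a, max (g (L a) - s) 0 ∂Ps = φ s
      rw [hPsint s]
    rw [h2] at h1
    have h3 : φ ts ≤ b := le_trans (le_ciInf hglob) h1
    have h4 : ts + c * S ts ≤ b := h3
    refine ⟨ts, fun P hP => ?_⟩
    have hS : S ts ≤ (b - ts) * (1 - ε) := by
      have h5 : c * S ts ≤ b - ts := by linarith
      calc S ts = (1 - ε) * (c * S ts) := by rw [hcdef]; field_simp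
        _ ≤ (1 - ε) * (b - ts) := mul_le_mul_of_nonneg_left h5 h1e.le
        _ = (b - ts) * (1 - ε) := mul_comm _ _
    calc ∫ a, max (g (∑ j, a j * x j) - ts) 0 ∂P
        ≤ S ts := hdom P hP ts
      _ ≤ (b - ts) * (1 - ε) := hS
  · rintro ⟨t, ht⟩ P hP
    have hprob : IsProbabilityMeasure P := hP.1
    have hK : ∀ s : ℝ, ∫ a, g (L a) ∂P ≤ s + c * ∫ a, max (g (L a) - s) 0 ∂P := by
      intro s
      have hmono_int : ∫ a, (g (L a) - s) ∂P ≤ ∫ a, max (g (L a) - s) 0 ∂P :=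
        integral_mono ((hIntg P hP).sub (integrable_const s)) (hInth P hP s)
          (fun a => le_max_left _ _)
      have hsub : ∫ a, (g (L a) - s) ∂P = (∫ a, g (L a) ∂P) - s := by
        rw [integral_sub (hIntg P hP) (integrable_const s), integral_const]
        simp [measure_univ]
      have hnn : 0 ≤ ∫ a, max (g (L a) - s) 0 ∂P :=
        integral_nonneg fun a => le_max_right _ _
      rw [hsub] at hmono_int
      nlinarith [mul_nonneg (sub_nonneg.2 hc1) hnn]
    have h5 : ∫ a, max (g (L a) - t) 0 ∂P ≤ (b - t) * (1 - ε) := ht P hP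
    have h6 : c * ((b - t) * (1 - ε)) = b - t := by rw [hcdef]; field_simp
    have hb' : t + c * ∫ a, max (g (L a) - t) 0 ∂P ≤ b := by
      have := mul_le_mul_of_nonneg_left h5 hcpos.le
      linarith
    show cvar P ε _ ≤ b
    unfold cvar
    refine le_trans (ciInf_le ?_ t) hb'
    refine ⟨∫ a, g (L a) ∂P, ?_⟩
    rintro y ⟨s, rfl⟩
    exact hK s
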